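/- Suppose the SD algorithm assigns to each point separated at a split in dimension a a strictly smaller block of grid positions in dimension a for the left group than for the right group (left group gets positions with a-th coordinate < c, right group gets positions with a-th coordinate ≥ c for some threshold c). Then for any pair p, q separated at that split with p in the left group, the final placement satisfies S(p)_a < S(q)_a. Consequently, for each point p, the number of type-I constraints involving p that are satisfied is at least n - 1. -/

import Mathlib

/-- suppose each pair of distinct points `i, j` is separated at a split
in dimension `d i j` with threshold `c i j`, the point on the smaller-coordinate
side receiving grid indices `< c i j` in that dimension and the other point
receiving indices `≥ c i j`. Then for any separated pair the placement is strictly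
ordered in the split dimension, and consequently for each point `p` at least
`n - 1` type-I constraints involving `p` are satisfied. -/
theorem sd_split_blocks_give_pointwise_guarantee (n k : ℕ)
    (x : Fin n → Fin k → ℝ)      -- original coordinates
    (S : Fin n → Fin k → ℤ)      -- final grid placement
    (d : Fin n → Fin n → Fin k)  -- dimension of the split separating a pair
    (c : Fin n → Fin n → ℤ)      -- grid-index threshold of that split
    (hdsymm : ∀ i j, d i j = d j i) (hcsymm : ∀ i j, c i j = c j i)
    (hsplit : ∀ i j, i ≠ j →
      (x i (d i j) ≤ x j (d i j) ∧ S i (d i j) < c i j ∧ c i j ≤ S j (d i j)) ∨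
      (x j (d i j) ≤ x i (d i j) ∧ S j (d i j) < c i j ∧ c i j ≤ S i (d i j))) :
    (∀ i j, i ≠ j → S i (d i j) < c i j → c i j ≤ S j (d i j) →
        S i (d i j) < S j (d i j)) ∧
    (∀ i : Fin n, n - 1 ≤ (Finset.univ.filter
        (fun jl : Fin n × Fin k => jl.1 ≠ i ∧
          (x i jl.2 < x jl.1 jl.2 → S i jl.2 < S jl.1 jl.2) ∧
          (x jl.1 jl.2 < x i jl.2 → S jl.1 jl.2 < S i jl.2))).card) := by
  constructor
  · intro i j _ h1 h2
    exact lt_of_lt_of_le h1 h2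
  · intro i
    have hcard : (Finset.univ.filter (fun j : Fin n => j ≠ i)).card = n - 1 := by
      simp [Finset.filter_ne', Finset.card_erase_of_mem]
    rw [← hcard]
    apply Finset.card_le_card_of_injOn (fun j => (j, d i j))
    · intro j hj
      simp only [Finset.mem_coe, Finset.mem_filter, Finset.mem_univ, true_and] at hj ⊢
      refine ⟨hj, ?_, ?_⟩
      · intro hx
        rcases hsplit i j (Ne.symm hj) with ⟨h1, h2, h3⟩ | ⟨h1, h2, h3⟩
        · exact lt_of_lt_of_le h2 h3
        · exact absurd hx (not_lt.2 h1)
      · intro hx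
        rcases hsplit i j (Ne.symm hj) with ⟨h1, h2, h3⟩ | ⟨h1, h2, h3⟩
        · exact absurd hx (not_lt.2 h1)
        · exact lt_of_lt_of_le h2 h3
    · intro a _ b _ h
      exact congrArg Prod.fst h
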